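/- For n ≥ 3 and t ≥ 1, the cooling number of ILT_t(P_n) equals ⌈2n/3⌉ if t = 1 and n ≡ 2 (mod 3), and equals ⌈2n/3⌉ + 1 otherwise. -/

import Mathlib

/-- A cooling sequence for `G`: a sequence `v : Fin k → V` of sources (the `i`-th source,
0-based, is chosen in round `i + 1`) such that each source is uncooled when chosen
(`dist (v i) (v j) > j - i` for `i < j` in 1-based indexing), and the sequence cannot be
extended: every vertex is cooled by the end of round `k + 1`. -/
def IsCoolingSeq {V : Type*} (G : SimpleGraph V) {k : ℕ} (v : Fin k → V) : Prop :=
  (∀ i j : Fin k, i < j → (j : ℕ) - (i : ℕ) < G.dist (v i) (v j)) ∧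
  (∀ u : V, ∃ i : Fin k, (i : ℕ) + 1 + G.dist (v i) u ≤ k + 1)

/-- The round in which the cooling process with sources `v` ends: the maximum over
vertices `u` of the first round in which `u` is cooled, `min_i (i + dist (v i) u)`
(1-based `i`). -/
noncomputable def coolTime {V : Type*} [Fintype V] (G : SimpleGraph V) {k : ℕ}
    (v : Fin k → V) : ℕ :=
  Finset.univ.sup fun u : V => sInf {m : ℕ | ∃ i : Fin k, m = (i : ℕ) + 1 + G.dist (v i) u}

/-- The cooling number of `G`: the maximum, over all cooling sequences of `G`, of the
round in which the cooling process ends. -/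
noncomputable def coolingNumber {V : Type*} [Fintype V] (G : SimpleGraph V) : ℕ :=
  sSup {T : ℕ | ∃ (k : ℕ) (v : Fin k → V), IsCoolingSeq G v ∧ T = coolTime G v}

/-- The Iterated Local Transitivity graph of `G`, on vertex set `V ⊕ V`, where `Sum.inr x`
is the clone of the original vertex `Sum.inl x`: clones are adjacent to their original
vertex and to its neighbors, and clones are pairwise non-adjacent. -/
def ILT {V : Type*} (G : SimpleGraph V) : SimpleGraph (V ⊕ V) :=
  SimpleGraph.fromRel fun a b =>
    match a, b with
    | Sum.inl x, Sum.inl y => G.Adj x y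
    | Sum.inl x, Sum.inr y => x = y ∨ G.Adj x y
    | Sum.inr x, Sum.inl y => x = y ∨ G.Adj x y
    | Sum.inr _, Sum.inr _ => False

/-- The vertex type of `ILT_t(G)`. -/
def ILTVert (V : Type*) : ℕ → Type _
  | 0 => V
  | t + 1 => ILTVert V t ⊕ ILTVert V t

instance ILTVert.fintype (V : Type*) [Fintype V] : ∀ t, Fintype (ILTVert V t)
  | 0 => inferInstanceAs (Fintype V)
  | t + 1 =>
    letI := ILTVert.fintype V t
    inferInstanceAs (Fintype (ILTVert V t ⊕ ILTVert V t))

/-- `ILTiter G t` is the result of `t` iterated applications of the ILT construction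
to `G`. -/
def ILTiter {V : Type*} (G : SimpleGraph V) : (t : ℕ) → SimpleGraph (ILTVert V t)
  | 0 => G
  | t + 1 => ILT (ILTiter G t)

namespace CoolILT
open SimpleGraph

variable {V : Type*} {G : SimpleGraph V}

lemma ILT_adj_ll {x y : V} : (ILT G).Adj (Sum.inl x) (Sum.inl y) ↔ G.Adj x y := by
  simp only [ILT, SimpleGraph.fromRel_adj]
  constructor
  · rintro ⟨-, h | h⟩
    · exact h
    · exact h.symm
  · intro h
    exact ⟨by simp [h.ne], Or.inl h⟩

lemma ILT_adj_lr {x y : V} : (ILT G).Adj (Sum.inl x) (Sum.inr y) ↔ (x = y ∨ G.Adj x y) := by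
  simp only [ILT, SimpleGraph.fromRel_adj]
  constructor
  · rintro ⟨-, h | h⟩
    · exact h
    · rcases h with h | h
      · exact Or.inl h.symm
      · exact Or.inr h.symm
  · rintro h
    exact ⟨by simp, Or.inl h⟩

lemma ILT_adj_rl {x y : V} : (ILT G).Adj (Sum.inr x) (Sum.inl y) ↔ (x = y ∨ G.Adj x y) := by
  rw [SimpleGraph.adj_comm, ILT_adj_lr]
  constructor <;> (rintro (h | h); exacts [Or.inl h.symm, Or.inr h.symm])

lemma ILT_adj_rr {x y : V} : ¬ (ILT G).Adj (Sum.inr x) (Sum.inr y) := by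
  simp only [ILT, SimpleGraph.fromRel_adj]
  rintro ⟨-, h | h⟩ <;> exact h

/-- the projection/co-clone map -/
def down : V ⊕ V → V := Sum.elim id id

lemma ILT_adj_down {a b : V ⊕ V} (h : (ILT G).Adj a b) :
    down a = down b ∨ G.Adj (down a) (down b) := by
  rcases a with x | x <;> rcases b with y | y <;> simp only [down, Sum.elim_inl, Sum.elim_inr, id]
  · exact Or.inr (ILT_adj_ll.mp h)
  · exact ILT_adj_lr.mp h
  · exact ILT_adj_rl.mp h
  · exact absurd h ILT_adj_rr

/-- projection of walks -/
lemma ILT_walk_down {a b : V ⊕ V} (w : (ILT G).Walk a b) :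
    ∃ w' : G.Walk (down a) (down b), w'.length ≤ w.length := by
  induction w with
  | nil => exact ⟨SimpleGraph.Walk.nil, le_refl _⟩
  | @cons a c b h w ih =>
    obtain ⟨w', hw'⟩ := ih
    rcases ILT_adj_down h with he | ha
    · refine ⟨w'.copy he.symm rfl, ?_⟩
      rw [SimpleGraph.Walk.length_copy, SimpleGraph.Walk.length_cons]; omega
    · exact ⟨SimpleGraph.Walk.cons ha w', by
        rw [SimpleGraph.Walk.length_cons, SimpleGraph.Walk.length_cons]; omega⟩

/-- the `inl` homomorphism -/
def inlHom (G : SimpleGraph V) : G →g (ILT G) where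
  toFun := Sum.inl
  map_rel' := fun h => ILT_adj_ll.mpr h

lemma ILT_walk_lr {x y : V} (hxy : x ≠ y) (w : G.Walk x y) :
    ∃ w' : (ILT G).Walk (Sum.inl x) (Sum.inr y), w'.length ≤ w.length := by
  induction w with
  | nil => exact absurd rfl hxy
  | @cons a c d h w ih =>
    by_cases hcv : c = d
    · subst hcv
      refine ⟨SimpleGraph.Walk.cons (ILT_adj_lr.mpr (Or.inr h)) SimpleGraph.Walk.nil, ?_⟩
      simp
    · obtain ⟨w', hw'⟩ := ih hcv
      refine ⟨SimpleGraph.Walk.cons (ILT_adj_ll.mpr h) w', ?_⟩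
      simp only [SimpleGraph.Walk.length_cons]; omega

lemma ILT_walk_rr {x y : V} (hxy : x ≠ y) (w : G.Walk x y) :
    ∃ w' : (ILT G).Walk (Sum.inr x) (Sum.inr y), w'.length ≤ max w.length 2 := by
  cases w with
  | nil => exact absurd rfl hxy
  | @cons _ c _ h w =>
    by_cases hcv : c = y
    · subst hcv
      refine ⟨SimpleGraph.Walk.cons (ILT_adj_rl.mpr (Or.inr h))
        (SimpleGraph.Walk.cons (ILT_adj_lr.mpr (Or.inl rfl)) SimpleGraph.Walk.nil), ?_⟩
      simp
    · obtain ⟨w', hw'⟩ := ILT_walk_lr hcv w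
      refine ⟨SimpleGraph.Walk.cons (ILT_adj_rl.mpr (Or.inr h)) w', ?_⟩
      simp only [SimpleGraph.Walk.length_cons, le_max_iff]
      left; omega

lemma ILT_connected (hG : G.Connected) : (ILT G).Connected := by
  have hne : Nonempty V := hG.nonempty
  constructor
  · intro a b
    have key : ∀ c : V ⊕ V, (ILT G).Reachable c (Sum.inl (down c)) := by
      intro c
      rcases c with x | x
      · exact SimpleGraph.Reachable.refl _
      · exact SimpleGraph.Adj.reachable (ILT_adj_rl.mpr (Or.inl rfl))
    refine (key a).trans (SimpleGraph.Reachable.trans ?_ (key b).symm)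
    obtain ⟨w⟩ := hG.preconnected (down a) (down b)
    exact ⟨w.map (inlHom G)⟩

lemma ILT_dist_down (a b : V ⊕ V) (h : (ILT G).Connected) :
    G.dist (down a) (down b) ≤ (ILT G).dist a b := by
  obtain ⟨w, hw⟩ := (h.preconnected a b).exists_walk_length_eq_dist
  obtain ⟨w', hw'⟩ := ILT_walk_down w
  calc G.dist (down a) (down b) ≤ w'.length := SimpleGraph.dist_le w'
  _ ≤ w.length := hw'
  _ = _ := hw

lemma ILT_dist_le (hG : G.Connected) {a b : V ⊕ V} (hab : a ≠ b) :
    (ILT G).dist a b ≤ max (G.dist (down a) (down b)) 2 := by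
  rcases a with x | x <;> rcases b with y | y <;>
    simp only [down, Sum.elim_inl, Sum.elim_inr, id]
  · have hxy : x ≠ y := fun h => hab (by rw [h])
    obtain ⟨w, hw⟩ := (hG.preconnected x y).exists_walk_length_eq_dist
    refine le_trans (le_trans (SimpleGraph.dist_le (w.map (inlHom G))) ?_) (le_max_left _ _)
    simp [hw]
  · by_cases hxy : x = y
    · subst hxy
      refine le_trans (SimpleGraph.dist_le
        (SimpleGraph.Walk.cons (ILT_adj_lr.mpr (Or.inl rfl)) SimpleGraph.Walk.nil)) ?_
      simp
    · obtain ⟨w, hw⟩ := (hG.preconnected x y).exists_walk_length_eq_dist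
      obtain ⟨w', hw'⟩ := ILT_walk_lr hxy w
      refine le_trans (SimpleGraph.dist_le w') (le_trans hw' ?_)
      rw [hw]; exact le_max_left _ _
  · by_cases hxy : x = y
    · subst hxy
      refine le_trans (SimpleGraph.dist_le
        (SimpleGraph.Walk.cons (ILT_adj_rl.mpr (Or.inl rfl)) SimpleGraph.Walk.nil)) ?_
      simp
    · obtain ⟨w, hw⟩ := (hG.preconnected y x).exists_walk_length_eq_dist
      obtain ⟨w', hw'⟩ := ILT_walk_lr (Ne.symm hxy) w
      rw [SimpleGraph.dist_comm]
      refine le_trans (SimpleGraph.dist_le w') (le_trans hw' ?_)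
      rw [hw, SimpleGraph.dist_comm]; exact le_max_left _ _
  · have hxy : x ≠ y := fun h => hab (by rw [h])
    obtain ⟨w, hw⟩ := (hG.preconnected x y).exists_walk_length_eq_dist
    obtain ⟨w', hw'⟩ := ILT_walk_rr hxy w
    refine le_trans (SimpleGraph.dist_le w') (le_trans hw' ?_)
    rw [hw]

end CoolILT

namespace CoolILT
open SimpleGraph

variable {V : Type*} {G : SimpleGraph V}

lemma walk_natdist {f : V → ℕ} (hf : ∀ a b, G.Adj a b → Nat.dist (f a) (f b) ≤ 1)
    {a b : V} (w : G.Walk a b) : Nat.dist (f a) (f b) ≤ w.length := by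
  induction w with
  | nil => simp [Nat.dist_self]
  | @cons a c b h w ih =>
    have h1 := hf _ _ h
    have h2 := Nat.dist.triangle_inequality (f a) (f c) (f b)
    rw [SimpleGraph.Walk.length_cons]
    omega

lemma pathGraph_adj_natdist {n : ℕ} {u v : Fin n} (h : (SimpleGraph.pathGraph n).Adj u v) :
    Nat.dist u.val v.val ≤ 1 := by
  rw [SimpleGraph.pathGraph_adj] at h
  simp only [Nat.dist]
  omega

lemma pathGraph_walk_aux {n : ℕ} : ∀ (d : ℕ) (u v : Fin n), v.val = u.val + d →
    ∃ w : (SimpleGraph.pathGraph n).Walk u v, w.length = d := by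
  intro d
  induction d with
  | zero =>
    intro u v h
    have huv : u = v := Fin.ext (by omega)
    subst huv
    exact ⟨SimpleGraph.Walk.nil, rfl⟩
  | succ d ih =>
    intro u v h
    have hm : u.val + 1 < n := by have := v.isLt; omega
    obtain ⟨w, hw⟩ := ih ⟨u.val + 1, hm⟩ v (show v.val = u.val + 1 + d by omega)
    refine ⟨SimpleGraph.Walk.cons ?_ w, by rw [SimpleGraph.Walk.length_cons, hw]⟩
    rw [SimpleGraph.pathGraph_adj]
    left; rfl

lemma pathGraph_walk {n : ℕ} (u v : Fin n) :
    ∃ w : (SimpleGraph.pathGraph n).Walk u v, w.length = Nat.dist u.val v.val := by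
  rcases le_total u.val v.val with h | h
  · exact pathGraph_walk_aux (v.val - u.val) u v (by omega) |>.imp
      (fun w hw => by rw [hw, Nat.dist]; omega)
  · obtain ⟨w, hw⟩ := pathGraph_walk_aux (u.val - v.val) v u (by omega)
    exact ⟨w.reverse, by rw [SimpleGraph.Walk.length_reverse, hw, Nat.dist]; omega⟩

lemma pathGraph_connected' {n : ℕ} (hn : 0 < n) : (SimpleGraph.pathGraph n).Connected := by
  have : Nonempty (Fin n) := ⟨⟨0, hn⟩⟩
  exact ⟨fun u v => ⟨(pathGraph_walk u v).choose⟩⟩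

lemma pathGraph_dist_eq {n : ℕ} (u v : Fin n) :
    (SimpleGraph.pathGraph n).dist u v = Nat.dist u.val v.val := by
  have hn : 0 < n := by have := u.isLt; omega
  apply le_antisymm
  · obtain ⟨w, hw⟩ := pathGraph_walk u v
    exact hw ▸ SimpleGraph.dist_le w
  · obtain ⟨w, hw⟩ := ((pathGraph_connected' hn).preconnected u v).exists_walk_length_eq_dist
    exact hw ▸ walk_natdist (fun a b h => pathGraph_adj_natdist h) w

/-! ### iterated ILT -/

variable {n : ℕ}

def pos : ∀ t, ILTVert (Fin n) t → ℕ
  | 0, x => x.val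
  | _+1, a => Sum.elim (pos _) (pos _) a

lemma pos_down {t : ℕ} (a : ILTVert (Fin n) (t+1)) :
    pos (t+1) a = pos t (down a) := by
  rcases a with x | x <;> rfl

lemma pos_lt : ∀ (t : ℕ) (a : ILTVert (Fin n) t), pos t a < n
  | 0, x => x.isLt
  | t+1, a => by rcases a with x | x <;> exact pos_lt t x

lemma ILTiter_connected (hn : 0 < n) :
    ∀ t, (ILTiter (SimpleGraph.pathGraph n) t).Connected
  | 0 => pathGraph_connected' hn
  | t+1 => ILT_connected (ILTiter_connected hn t)

lemma ILTiter_adj_pos : ∀ (t : ℕ) {a b : ILTVert (Fin n) t},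
    (ILTiter (SimpleGraph.pathGraph n) t).Adj a b → Nat.dist (pos t a) (pos t b) ≤ 1
  | 0, a, b, h => pathGraph_adj_natdist h
  | t+1, a, b, h => by
    rw [pos_down a, pos_down b]
    rcases ILT_adj_down h with he | ha
    · rw [he]; simp [Nat.dist_self]
    · exact ILTiter_adj_pos t ha

/-- F1 : lower bound on distance -/
lemma dist_ge_pos (hn : 0 < n) (t : ℕ) (a b : ILTVert (Fin n) t) :
    Nat.dist (pos t a) (pos t b) ≤ (ILTiter (SimpleGraph.pathGraph n) t).dist a b := by
  obtain ⟨w, hw⟩ := (((ILTiter_connected hn t).preconnected) a b).exists_walk_length_eq_dist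
  exact hw ▸ walk_natdist (fun a b h => ILTiter_adj_pos t h) w

/-- F2 : upper bound on distance -/
lemma dist_le_pos (hn : 0 < n) : ∀ (t : ℕ) (a b : ILTVert (Fin n) t),
    (ILTiter (SimpleGraph.pathGraph n) t).dist a b ≤ max (Nat.dist (pos t a) (pos t b)) 2
  | 0, a, b => by
      rw [show (ILTiter (SimpleGraph.pathGraph n) 0) = SimpleGraph.pathGraph n from rfl]
      exact le_trans (le_of_eq (pathGraph_dist_eq (n := n) a b)) (le_max_left _ _)
  | t+1, a, b => by
    by_cases hab : a = b
    · subst hab; simp [SimpleGraph.dist_self]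
    · refine le_trans (ILT_dist_le (ILTiter_connected hn t) hab) ?_
      have := dist_le_pos hn t (down a) (down b)
      rw [pos_down a, pos_down b]
      omega

/-- L2 : distinct clones are at distance ≥ 2 -/
lemma dist_clones_ge_two (hn : 0 < n) (t : ℕ) {x y : ILTVert (Fin n) t}
    (hxy : x ≠ y) :
    2 ≤ (ILTiter (SimpleGraph.pathGraph n) (t+1)).dist (Sum.inr x) (Sum.inr y) := by
  have h0 : (ILTiter (SimpleGraph.pathGraph n) (t+1)).dist (Sum.inr x) (Sum.inr y) ≠ 0 := by
    have := (ILTiter_connected hn (t+1)).pos_dist_of_ne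
      (show (Sum.inr x : ILTVert (Fin n) (t+1)) ≠ Sum.inr y by simp [hxy])
    omega
  have h1 : (ILTiter (SimpleGraph.pathGraph n) (t+1)).dist (Sum.inr x) (Sum.inr y) ≠ 1 := by
    intro h
    exact ILT_adj_rr (SimpleGraph.dist_eq_one_iff_adj.mp h)
  omega

/-- t = 1 structure: two vertices at distance ≥ 2 whose positions differ by ≤ 1
are both clones -/
lemma both_clones (hn : 0 < n) {a b : ILTVert (Fin n) 1}
    (hd : 2 ≤ (ILTiter (SimpleGraph.pathGraph n) 1).dist a b)
    (hpos : Nat.dist (pos 1 a) (pos 1 b) ≤ 1) :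
    ∃ p q : Fin n, a = Sum.inr p ∧ b = Sum.inr q := by
  have hab : a ≠ b := by
    rintro rfl
    rw [SimpleGraph.dist_self] at hd; omega
  have hnadj : ¬ (ILTiter (SimpleGraph.pathGraph n) 1).Adj a b := by
    intro h
    rw [← SimpleGraph.dist_eq_one_iff_adj] at h; omega
  rcases a with x | x <;> rcases b with y | y
  · exfalso
    apply hnadj
    apply ILT_adj_ll.mpr
    show (SimpleGraph.pathGraph n).Adj x y
    apply SimpleGraph.pathGraph_adj.mpr
    have h1 : x ≠ y := fun h => hab (by rw [h])
    have h2 : (x : Fin n).val ≠ (y : Fin n).val := fun h => h1 (Fin.ext h)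
    simp only [pos, Sum.elim_inl, Nat.dist] at hpos
    omega
  · exfalso
    apply hnadj
    apply ILT_adj_lr.mpr
    by_cases hxy : x = y
    · exact Or.inl hxy
    · right
      show (SimpleGraph.pathGraph n).Adj x y
      apply SimpleGraph.pathGraph_adj.mpr
      have h2 : (x : Fin n).val ≠ (y : Fin n).val := fun h => hxy (Fin.ext h)
      simp only [pos, Sum.elim_inl, Sum.elim_inr, Nat.dist] at hpos
      omega
  · exfalso
    apply hnadj
    apply ILT_adj_rl.mpr
    by_cases hxy : x = y
    · exact Or.inl hxy
    · right
      show (SimpleGraph.pathGraph n).Adj x y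
      apply SimpleGraph.pathGraph_adj.mpr
      have h2 : (x : Fin n).val ≠ (y : Fin n).val := fun h => hxy (Fin.ext h)
      simp only [pos, Sum.elim_inl, Sum.elim_inr, Nat.dist] at hpos
      omega
  · exact ⟨x, y, rfl, rfl⟩

end CoolILT

namespace CoolILT

/-! ### combinatorial core -/

/-- the extremal position sequence 0,1,3,4,6,7,… -/
def fseq (i : ℕ) : ℕ := 3 * (i / 2) + i % 2

lemma fseq_add_two (i : ℕ) : fseq (i + 2) = fseq i + 3 := by
  simp only [fseq]; omega

section core

variable {k n : ℕ} {x : ℕ → ℕ}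

/-- the contrapositive tool: close values force adjacent indices -/
lemma bnd (hgap : ∀ i j, i + 2 ≤ j → j < k → j - i < Nat.dist (x i) (x j))
    {p q : ℕ} (hpq : p < q) (hq : q < k) (h : Nat.dist (x p) (x q) ≤ q - p) :
    q = p + 1 := by
  by_contra hne
  have h2 : p + 2 ≤ q := by omega
  have := hgap p q h2 hq
  omega

/-- close values force close indices -/
lemma near (hgap : ∀ i j, i + 2 ≤ j → j < k → j - i < Nat.dist (x i) (x j))
    {c p q : ℕ} (hc : 1 ≤ c) (hp : p < k) (hq : q < k) (hpq : p ≠ q)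
    (h : Nat.dist (x p) (x q) ≤ c + 1) : p - q ≤ c ∧ q - p ≤ c := by
  rcases (by omega : p < q ∨ q < p) with hlt | hlt
  · refine ⟨by omega, ?_⟩
    by_contra hgt
    have := bnd hgap hlt hq (by omega)
    omega
  · refine ⟨?_, by omega⟩
    by_contra hgt
    have : Nat.dist (x q) (x p) ≤ c + 1 := by rwa [Nat.dist_comm]
    have := bnd hgap hlt hp (by omega)
    omega

lemma div3_natdist {p q : ℕ} (h : p / 3 = q / 3) : Nat.dist p q ≤ 2 := by
  simp only [Nat.dist]; omega

lemma fiber_card_le (hgap : ∀ i j, i + 2 ≤ j → j < k → j - i < Nat.dist (x i) (x j))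
    (a : ℕ) : ((Finset.range k).filter (fun i => x i / 3 = a)).card ≤ 2 := by
  by_contra hcard
  push_neg at hcard
  obtain ⟨i, hi, j, hj, l, hl, hij, hil, hjl⟩ := Finset.two_lt_card.mp hcard
  simp only [Finset.mem_filter, Finset.mem_range] at hi hj hl
  have key : ∀ p q, (p = i ∨ p = j ∨ p = l) → (q = i ∨ q = j ∨ q = l) → p + 2 ≤ q → False := by
    intro p q hp hq hpq2
    have hxp : x p / 3 = a := by rcases hp with rfl|rfl|rfl <;> tauto
    have hxq : x q / 3 = a := by rcases hq with rfl|rfl|rfl <;> tauto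
    have hqk : q < k := by rcases hq with rfl|rfl|rfl <;> omega
    have := hgap p q hpq2 hqk
    have := div3_natdist (hxp.trans hxq.symm)
    omega
  rcases (by omega : i + 2 ≤ j ∨ j + 2 ≤ i ∨ i + 2 ≤ l ∨ l + 2 ≤ i ∨ j + 2 ≤ l ∨ l + 2 ≤ j) with
    h|h|h|h|h|h
  · exact key i j (by tauto) (by tauto) h
  · exact key j i (by tauto) (by tauto) h
  · exact key i l (by tauto) (by tauto) h
  · exact key l i (by tauto) (by tauto) h
  · exact key j l (by tauto) (by tauto) h
  · exact key l j (by tauto) (by tauto) h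

lemma card_sum_fibers (hrange : ∀ i < k, x i < n) :
    k = ∑ a ∈ Finset.range ((n + 2) / 3),
      ((Finset.range k).filter (fun i => x i / 3 = a)).card := by
  have h := Finset.card_eq_sum_card_fiberwise
    (f := fun i => x i / 3) (s := Finset.range k) (t := Finset.range ((n + 2) / 3))
    (by intro i hi
        rw [Finset.mem_coe, Finset.mem_range] at hi
        simp only [Finset.mem_coe, Finset.mem_range]
        have := hrange i hi
        omega)
  rw [Finset.card_range] at h
  exact h

lemma k_le_main (hgap : ∀ i j, i + 2 ≤ j → j < k → j - i < Nat.dist (x i) (x j))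
    (hrange : ∀ i < k, x i < n) : k ≤ 2 * ((n + 2) / 3) := by
  rw [card_sum_fibers hrange]
  calc ∑ a ∈ Finset.range ((n + 2) / 3), ((Finset.range k).filter (fun i => x i / 3 = a)).card
      ≤ ∑ _a ∈ Finset.range ((n + 2) / 3), 2 :=
        Finset.sum_le_sum (fun a _ => fiber_card_le hgap a)
    _ = 2 * ((n + 2) / 3) := by
        rw [Finset.sum_const, Finset.card_range, smul_eq_mul]; omega

lemma all_fibers_two (hgap : ∀ i j, i + 2 ≤ j → j < k → j - i < Nat.dist (x i) (x j))
    (hrange : ∀ i < k, x i < n) (hk : k = 2 * ((n + 2) / 3)) :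
    ∀ a ∈ Finset.range ((n + 2) / 3),
      ((Finset.range k).filter (fun i => x i / 3 = a)).card = 2 := by
  by_contra hne
  push_neg at hne
  obtain ⟨a, ha, hna⟩ := hne
  have hlt : ((Finset.range k).filter (fun i => x i / 3 = a)).card < 2 :=
    lt_of_le_of_ne (fiber_card_le hgap a) hna
  have : (∑ b ∈ Finset.range ((n + 2) / 3),
      ((Finset.range k).filter (fun i => x i / 3 = b)).card) <
      ∑ _b ∈ Finset.range ((n + 2) / 3), 2 :=
    Finset.sum_lt_sum (fun b _ => fiber_card_le hgap b) ⟨a, ha, hlt⟩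
  rw [← card_sum_fibers hrange, Finset.sum_const, Finset.card_range, smul_eq_mul] at this
  omega

/-- extract the two members of a fiber of cardinality two -/
lemma fiber_pair {a : ℕ}
    (h2 : ((Finset.range k).filter (fun i => x i / 3 = a)).card = 2) :
    ∃ p q, p ≠ q ∧ p < k ∧ q < k ∧ x p / 3 = a ∧ x q / 3 = a ∧
      (∀ r, r < k → x r / 3 = a → r = p ∨ r = q) := by
  obtain ⟨p, q, hpq, hs⟩ := Finset.card_eq_two.mp h2
  have hp : p ∈ (Finset.range k).filter (fun i => x i / 3 = a) := by rw [hs]; simp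
  have hq : q ∈ (Finset.range k).filter (fun i => x i / 3 = a) := by rw [hs]; simp
  simp only [Finset.mem_filter, Finset.mem_range] at hp hq
  refine ⟨p, q, hpq, hp.1, hq.1, hp.2, hq.2, ?_⟩
  intro r hr hxr
  have : r ∈ (Finset.range k).filter (fun i => x i / 3 = a) := by
    simp only [Finset.mem_filter, Finset.mem_range]; exact ⟨hr, hxr⟩
  rw [hs] at this
  simpa using this

/-- For n ≡ 1 (mod 3) the main bound can be improved by one. -/
lemma k_le_refined (hgap : ∀ i j, i + 2 ≤ j → j < k → j - i < Nat.dist (x i) (x j))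
    (hrange : ∀ i < k, x i < n) (hn : 3 ≤ n) (h1 : n % 3 = 1) :
    k ≤ (2 * n + 2) / 3 := by
  by_contra hk
  push_neg at hk
  have hkmax := k_le_main hgap hrange
  have hkeq : k = 2 * ((n + 2) / 3) := by omega
  set M := (n - 1) / 3 with hM
  have hnM : n = 3 * M + 1 := by omega
  have hM1 : 1 ≤ M := by omega
  have hall := all_fibers_two hgap hrange hkeq
  -- top fiber: value 3M, two adjacent indices
  obtain ⟨p, q, hpq, hpk, hqk, hxp, hxq, -⟩ :=
    fiber_pair (hall M (by rw [Finset.mem_range]; omega))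
  have hxpv : x p = 3 * M := by have := hrange p hpk; omega
  have hxqv : x q = 3 * M := by have := hrange q hqk; omega
  -- make i₁ < i₂ = i₁ + 1
  obtain ⟨i₁, hi₁k, hi₂k, hx₁, hx₂⟩ :
      ∃ i₁, i₁ < k ∧ i₁ + 1 < k ∧ x i₁ = 3 * M ∧ x (i₁ + 1) = 3 * M := by
    rcases (by omega : p < q ∨ q < p) with hlt | hlt
    · have := bnd hgap hlt hqk (by rw [hxpv, hxqv, Nat.dist_self]; omega)
      exact ⟨p, hpk, by omega, hxpv, by rw [← this]; exact hxqv⟩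
    · have := bnd hgap hlt hpk (by rw [hxpv, hxqv, Nat.dist_self]; omega)
      exact ⟨q, hqk, by omega, hxqv, by rw [← this]; exact hxpv⟩
  -- second fiber M-1
  obtain ⟨τ₁, τ₂, hτne, hτ₁k, hτ₂k, hxτ₁, hxτ₂, -⟩ :=
    fiber_pair (hall (M - 1) (by rw [Finset.mem_range]; omega))
  have key : ∀ τ, τ < k → x τ / 3 = M - 1 → x τ = 3 * M - 3 ∧ (τ + 1 = i₁ ∨ τ = i₁ + 2) := by
    intro τ hτk hxτ
    have hv : 3 * M - 3 ≤ x τ ∧ x τ ≤ 3 * M - 1 := by omega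
    have hτi₁ : τ ≠ i₁ := by intro h; rw [h, hx₁] at hxτ; omega
    have hτi₂ : τ ≠ i₁ + 1 := by intro h; rw [h, hx₂] at hxτ; omega
    have d1 : Nat.dist (x τ) (x i₁) ≤ 3 := by rw [hx₁]; simp only [Nat.dist]; omega
    have d2 : Nat.dist (x τ) (x (i₁+1)) ≤ 3 := by rw [hx₂]; simp only [Nat.dist]; omega
    have n1 := near hgap (by omega : (1:ℕ) ≤ 2) hτk hi₁k hτi₁ (by omega)
    have n2 := near hgap (by omega : (1:ℕ) ≤ 2) hτk hi₂k hτi₂ (by omega)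
    have hval : x τ = 3 * M - 3 := by
      by_contra hne
      have d1' : Nat.dist (x τ) (x i₁) ≤ 2 := by rw [hx₁]; simp only [Nat.dist]; omega
      have d2' : Nat.dist (x τ) (x (i₁+1)) ≤ 2 := by rw [hx₂]; simp only [Nat.dist]; omega
      have m1 := near hgap (le_refl 1) hτk hi₁k hτi₁ (by omega)
      have m2 := near hgap (le_refl 1) hτk hi₂k hτi₂ (by omega)
      omega
    exact ⟨hval, by omega⟩
  obtain ⟨hv₁, hp₁⟩ := key τ₁ hτ₁k hxτ₁
  obtain ⟨hv₂, hp₂⟩ := key τ₂ hτ₂k hxτ₂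
  -- τ₁ τ₂ are i₁-1 and i₁+2 in some order, with equal values : contradiction
  have hdist0 : Nat.dist (x τ₁) (x τ₂) = 0 := by rw [hv₁, hv₂, Nat.dist_self]
  have hdist0' : Nat.dist (x τ₂) (x τ₁) = 0 := by rw [hv₁, hv₂, Nat.dist_self]
  rcases (by omega : τ₁ < τ₂ ∨ τ₂ < τ₁) with hlt | hlt
  · have := bnd hgap hlt hτ₂k (by omega)
    omega
  · have := bnd hgap hlt hτ₁k (by omega)
    omega

/-- The universal upper bound `k ≤ ⌈2n/3⌉`. -/
lemma k_le (hgap : ∀ i j, i + 2 ≤ j → j < k → j - i < Nat.dist (x i) (x j))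
    (hrange : ∀ i < k, x i < n) (hn : 3 ≤ n) : k ≤ (2 * n + 2) / 3 := by
  rcases (by omega : n % 3 = 0 ∨ n % 3 = 1 ∨ n % 3 = 2) with h | h | h
  · have := k_le_main hgap hrange; omega
  · exact k_le_refined hgap hrange hn h
  · have := k_le_main hgap hrange; omega

end core
end CoolILT

namespace CoolILT

section unique

/-- Uniqueness of the extremal configuration when `n ≡ 2 (mod 3)`. -/
lemma unique_extremal : ∀ (m : ℕ) (x : ℕ → ℕ),
    (∀ i < 2*m+2, x i < 3*m+2) →
    (∀ i j, i < j → j < 2*m+2 → x i ≠ x j) →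
    (∀ i j, i + 2 ≤ j → j < 2*m+2 → j - i < Nat.dist (x i) (x j)) →
    (∀ i < 2*m+2, x i = fseq i) ∨ (∀ i < 2*m+2, x i = 3*m+1 - fseq i) := by
  intro m
  induction m with
  | zero =>
    intro x hrange hinj hgap
    have h0 := hrange 0 (by omega)
    have h1 := hrange 1 (by omega)
    have hne := hinj 0 1 (by omega) (by omega)
    rcases (by omega : x 0 = 0 ∧ x 1 = 1 ∨ x 0 = 1 ∧ x 1 = 0) with ⟨ha, hb⟩ | ⟨ha, hb⟩
    · left; intro i hi
      interval_cases i <;> simp [fseq, ha, hb]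
    · right; intro i hi
      interval_cases i <;> simp [fseq, ha, hb]
  | succ m IH =>
    intro x hrange hinj hgap
    -- main: the case where the first two entries are < 3
    have main : ∀ y : ℕ → ℕ,
        (∀ i < 2*(m+1)+2, y i < 3*(m+1)+2) →
        (∀ i j, i < j → j < 2*(m+1)+2 → y i ≠ y j) →
        (∀ i j, i + 2 ≤ j → j < 2*(m+1)+2 → j - i < Nat.dist (y i) (y j)) →
        y 0 < 3 → y 1 < 3 →
        (∀ i < 2*(m+1)+2, y i = fseq i) := by
      intro y hrange hinj hgap h0 h1
      have htail0 : ∀ j, 2 ≤ j → j < 2*(m+1)+2 → y 0 + j + 1 ≤ y j := by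
        intro j h2 hj
        have := hgap 0 j (by omega) hj
        simp only [Nat.dist] at this
        omega
      set z : ℕ → ℕ := fun i => y (i+2) - 3 with hz
      have hz3 : ∀ i, i < 2*m+2 → 3 ≤ y (i+2) := by
        intro i hi
        have := htail0 (i+2) (by omega) (by omega)
        omega
      have hzrange : ∀ i < 2*m+2, z i < 3*m+2 := by
        intro i hi
        have := hrange (i+2) (by omega)
        have := hz3 i hi
        simp only [hz]
        omega
      have hzinj : ∀ i j, i < j → j < 2*m+2 → z i ≠ z j := by
        intro i j hij hj heq
        have h3i := hz3 i (by omega)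
        have h3j := hz3 j (by omega)
        simp only [hz] at heq
        exact hinj (i+2) (j+2) (by omega) (by omega) (by omega)
      have hzgap : ∀ i j, i + 2 ≤ j → j < 2*m+2 → j - i < Nat.dist (z i) (z j) := by
        intro i j hij hj
        have := hgap (i+2) (j+2) (by omega) (by omega)
        have h3i := hz3 i (by omega)
        have h3j := hz3 j (by omega)
        simp only [hz, Nat.dist] at *
        omega
      rcases IH z hzrange hzinj hzgap with hf | hr
      · have hy2 : y 2 = 3 := by
          have h1 := hf 0 (by omega)
          have h2 := hz3 0 (by omega)
          simp only [hz, fseq] at h1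
          norm_num at h1 h2
          omega
        have hy0 : y 0 = 0 := by
          have := hgap 0 2 (by omega) (by omega)
          rw [hy2] at this
          simp only [Nat.dist] at this
          omega
        have hy3 : y 3 = 4 := by
          have h1 := hf 1 (by omega)
          have h2 := hz3 1 (by omega)
          simp only [hz, fseq] at h1
          norm_num at h1 h2
          omega
        have hy1 : y 1 = 1 := by
          have := hgap 1 3 (by omega) (by omega)
          have hne := hinj 0 1 (by omega) (by omega)
          rw [hy3] at this
          simp only [Nat.dist] at this
          omega
        intro i hi
        rcases (by omega : i = 0 ∨ i = 1 ∨ 2 ≤ i) with rfl | rfl | h2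
        · rw [hy0]; rfl
        · rw [hy1]; rfl
        · have hfi := hf (i-2) (by omega)
          have h3 := hz3 (i-2) (by omega)
          have harith : fseq (i - 2 + 2) = fseq (i-2) + 3 := fseq_add_two (i-2)
          have hieq : i - 2 + 2 = i := by omega
          rw [hieq] at harith
          simp only [hz] at hfi
          rw [hieq] at hfi h3
          omega
      · exfalso
        have hlast := hr (2*m+1) (by omega)
        have hfv : fseq (2*m+1) = 3*m+1 := by simp only [fseq]; omega
        have h3 := hz3 (2*m+1) (by omega)
        simp only [hz] at hlast
        have e : 2*m+1+2 = 2*m+3 := by omega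
        rw [e] at hlast h3
        have := htail0 (2*m+3) (by omega) (by omega)
        omega
    -- window structure
    have hall := all_fibers_two (n := 3*(m+1)+2) hgap hrange (by omega)
    have hc0 : x 0 / 3 ≤ m + 1 := by have := hrange 0 (by omega); omega
    -- partner of index 0 is index 1
    have hpartner : x 1 / 3 = x 0 / 3 := by
      obtain ⟨p, q, hpq, hpk, hqk, hxp, hxq, huniq⟩ :=
        fiber_pair (hall (x 0 / 3) (by rw [Finset.mem_range]; omega))
      have hd : Nat.dist (x p) (x q) ≤ 2 := div3_natdist (hxp.trans hxq.symm)
      rcases huniq 0 (by omega) rfl with rfl | rfl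
      · have hn := near hgap (le_refl 1) hqk hpk (Ne.symm hpq) (by rwa [Nat.dist_comm])
        have : q = 1 := by omega
        rw [← this]; exact hxq
      · have hn := near hgap (le_refl 1) hpk hqk hpq (by omega)
        have : p = 1 := by omega
        rw [← this]; exact hxp
    -- middle exclusion
    have hc : x 0 / 3 = 0 ∨ x 0 / 3 = m + 1 := by
      by_contra hmid
      push_neg at hmid
      set c := x 0 / 3 with hcdef
      have hc1 : 1 ≤ c := by omega
      have hcm : c ≤ m := by omega
      obtain ⟨j₁, j₂, hjne, hj₁k, hj₂k, hxj₁, hxj₂, -⟩ :=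
        fiber_pair (hall (c-1) (by rw [Finset.mem_range]; omega))
      obtain ⟨l₁, l₂, hlne, hl₁k, hl₂k, hxl₁, hxl₂, -⟩ :=
        fiber_pair (hall (c+1) (by rw [Finset.mem_range]; omega))
      have key : ∀ η, η < 2*(m+1)+2 → (x η / 3 = c - 1 ∨ x η / 3 = c + 1) →
          2 ≤ η ∧ η ≤ 4 := by
        intro η hηk hη
        have hη0 : η ≠ 0 := by
          intro h; subst h
          rcases hη with h | h <;> omega
        have hη1 : η ≠ 1 := by
          intro h; subst h
          rw [hpartner] at hη
          rcases hη with h | h <;> omega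
        have hdist : Nat.dist (x 0) (x η) ≤ 5 := by
          simp only [Nat.dist]
          rcases hη with h | h <;> omega
        have := hgap 0 η (by omega) hηk
        omega
      have k1 := key j₁ hj₁k (Or.inl hxj₁)
      have k2 := key j₂ hj₂k (Or.inl hxj₂)
      have k3 := key l₁ hl₁k (Or.inr hxl₁)
      have k4 := key l₂ hl₂k (Or.inr hxl₂)
      have hjl : ∀ a b, x a / 3 = c - 1 → x b / 3 = c + 1 → a ≠ b := by
        intro a b ha hb h; subst h; omega
      have d13 := hjl j₁ l₁ hxj₁ hxl₁
      have d14 := hjl j₁ l₂ hxj₁ hxl₂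
      have d23 := hjl j₂ l₁ hxj₂ hxl₁
      have d24 := hjl j₂ l₂ hxj₂ hxl₂
      omega
    rcases hc with hc | hc
    · left
      refine main x hrange hinj hgap (by omega) ?_
      rw [← hpartner] at hc
      omega
    · right
      set x' : ℕ → ℕ := fun i => 3*(m+1)+1 - x i with hx'
      have hxle : ∀ i < 2*(m+1)+2, x i ≤ 3*(m+1)+1 := by
        intro i hi; have := hrange i hi; omega
      have h'range : ∀ i < 2*(m+1)+2, x' i < 3*(m+1)+2 := by
        intro i hi; simp only [hx']; omega
      have h'inj : ∀ i j, i < j → j < 2*(m+1)+2 → x' i ≠ x' j := by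
        intro i j hij hj heq
        have := hxle i (by omega)
        have := hxle j (by omega)
        simp only [hx'] at heq
        exact hinj i j hij hj (by omega)
      have h'gap : ∀ i j, i + 2 ≤ j → j < 2*(m+1)+2 → j - i < Nat.dist (x' i) (x' j) := by
        intro i j hij hj
        have := hgap i j hij hj
        have := hxle i (by omega)
        have := hxle j (by omega)
        simp only [hx', Nat.dist] at *
        omega
      have h'0 : x' 0 < 3 := by
        have := hxle 0 (by omega); simp only [hx']; omega
      have h'1 : x' 1 < 3 := by
        have h := hpartner
        rw [hc] at h
        have := hxle 1 (by omega); simp only [hx']; omega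
      have hres := main x' h'range h'inj h'gap h'0 h'1
      intro i hi
      have hr1 := hres i hi
      have hr2 := hxle i hi
      simp only [hx'] at hr1
      omega

/-- where the witness must sit, for the extremal configuration -/
lemma witness_pos {m : ℕ} (hm : 1 ≤ m) {y : ℕ} (hy : y < 3*m+2)
    (hw : ∀ i, i + 3 ≤ 2*m+2 → 2*m+2 - i ≤ Nat.dist (fseq i) y) : y = 3*m+1 := by
  by_contra hne
  rcases (by omega : y/3 ≤ m - 1 ∨ y = 3*m ∨ y = 3*m+1) with ha | ha | ha
  · have h := hw (2*(y/3)) (by omega)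
    have hfv : fseq (2*(y/3)) = 3*(y/3) := by simp only [fseq]; omega
    rw [hfv] at h
    simp only [Nat.dist] at h
    omega
  · have h := hw (2*m-1) (by omega)
    have hfv : fseq (2*m-1) = 3*m-2 := by simp only [fseq]; omega
    rw [hfv] at h
    simp only [Nat.dist] at h
    omega
  · exact hne ha

end unique
end CoolILT

namespace CoolILT
open SimpleGraph

section assembly

variable {n : ℕ}

def emb : ∀ t, Fin n → ILTVert (Fin n) t
  | 0 => id
  | t+1 => fun p => Sum.inl (emb t p)

lemma pos_emb : ∀ (t : ℕ) (p : Fin n), pos t (emb t p) = p.val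
  | 0, _ => rfl
  | t+1, p => pos_emb t p

/-- the clone sequence used in all constructions -/
def vseq (s k : ℕ) (hfk : ∀ i, i < k → fseq i < n) : Fin k → ILTVert (Fin n) (s+1) :=
  fun i => Sum.inr (emb s ⟨fseq i, hfk i i.isLt⟩)

lemma vseq_pos {s k : ℕ} (hfk : ∀ i, i < k → fseq i < n) (i : Fin k) :
    pos (s+1) (vseq s k hfk i) = fseq i :=
  pos_emb s _

lemma vseq_ne {s k : ℕ} (hfk : ∀ i, i < k → fseq i < n) {i j : Fin k} (hij : i ≠ j) :
    (emb s ⟨fseq i, hfk i i.isLt⟩ : ILTVert (Fin n) s) ≠ emb s ⟨fseq j, hfk j j.isLt⟩ := by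
  intro h
  have h2 := congrArg (pos s) h
  rw [pos_emb, pos_emb] at h2
  have hfm : (i : ℕ) ≠ (j : ℕ) := fun hn => hij (Fin.ext hn)
  simp only [fseq] at h2
  omega

lemma cond1_vseq {s k : ℕ} (hn0 : 0 < n) (hfk : ∀ i, i < k → fseq i < n) :
    ∀ i j : Fin k, i < j → (j : ℕ) - (i : ℕ) <
      (ILTiter (SimpleGraph.pathGraph n) (s+1)).dist (vseq s k hfk i) (vseq s k hfk j) := by
  intro i j hij
  rcases (by omega : (j : ℕ) = (i : ℕ) + 1 ∨ (i : ℕ) + 2 ≤ (j : ℕ)) with h1 | h2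
  · have h2 := dist_clones_ge_two hn0 s (vseq_ne hfk (Fin.ne_of_lt hij))
    simp only [vseq] at h2 ⊢
    omega
  · have hge := dist_ge_pos hn0 (s+1) (vseq s k hfk i) (vseq s k hfk j)
    rw [vseq_pos, vseq_pos] at hge
    have : (j : ℕ) - (i : ℕ) < Nat.dist (fseq (i : ℕ)) (fseq (j : ℕ)) := by
      simp only [fseq, Nat.dist]
      omega
    omega

lemma dist_vseq_le {s k : ℕ} (hn0 : 0 < n) (hfk : ∀ i, i < k → fseq i < n) (i : Fin k)
    (u : ILTVert (Fin n) (s+1)) :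
    (ILTiter (SimpleGraph.pathGraph n) (s+1)).dist (vseq s k hfk i) u ≤
      max (Nat.dist (fseq (i : ℕ)) (pos (s+1) u)) 2 := by
  have := dist_le_pos hn0 (s+1) (vseq s k hfk i) u
  rwa [vseq_pos] at this

lemma dist_vseq_ge {s k : ℕ} (hn0 : 0 < n) (hfk : ∀ i, i < k → fseq i < n) (i : Fin k)
    (u : ILTVert (Fin n) (s+1)) :
    Nat.dist (fseq (i : ℕ)) (pos (s+1) u) ≤
      (ILTiter (SimpleGraph.pathGraph n) (s+1)).dist (vseq s k hfk i) u := by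
  have := dist_ge_pos hn0 (s+1) (vseq s k hfk i) u
  rwa [vseq_pos] at this

/-! ### coolTime helpers -/

lemma coolTime_le_of_cover {W : Type*} [Fintype W] {G : SimpleGraph W} {k : ℕ}
    {v : Fin k → W} (h2 : ∀ u, ∃ i : Fin k, (i : ℕ) + 1 + G.dist (v i) u ≤ k + 1) :
    coolTime G v ≤ k + 1 := by
  apply Finset.sup_le
  intro u _
  obtain ⟨i, hi⟩ := h2 u
  exact le_trans (Nat.sInf_le ⟨i, rfl⟩) hi

lemma le_coolTime_of_witness {W : Type*} [Fintype W] {G : SimpleGraph W} {k : ℕ}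
    {v : Fin k → W} (u : W) {c : ℕ} (hk : 0 < k)
    (hc : ∀ i : Fin k, c ≤ (i : ℕ) + 1 + G.dist (v i) u) :
    c ≤ coolTime G v := by
  refine le_trans ?_ (Finset.le_sup (Finset.mem_univ u))
  apply le_csInf
  · exact ⟨_, ⟨⟨0, hk⟩, rfl⟩⟩
  · rintro m ⟨i, rfl⟩
    exact hc i

/-- generic cover statement for the vseq construction -/
lemma cover_vseq {s k m : ℕ} (hn0 : 0 < n) (hfk : ∀ i, i < k → fseq i < n)
    (hk : ∀ q, q < n → (2*(q/3) < k ∧ 2*(q/3) + 3 ≤ k + 1) ∨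
      (q = 3*m ∧ 2*m-1 < k ∧ 2*m+2 ≤ k+1 ∧ 1 ≤ m)) :
    ∀ u, ∃ i : Fin k,
      (i : ℕ) + 1 + (ILTiter (SimpleGraph.pathGraph n) (s+1)).dist (vseq s k hfk i) u
        ≤ k + 1 := by
  intro u
  obtain ⟨q, hq⟩ : ∃ q, pos (s+1) u = q := ⟨_, rfl⟩
  have hqn : q < n := hq ▸ pos_lt _ u
  rcases hk q hqn with ⟨h1, h2⟩ | ⟨hq3, h1, h2, hm⟩
  · refine ⟨⟨2*(q/3), h1⟩, ?_⟩
    have hd := dist_vseq_le hn0 hfk ⟨2*(q/3), h1⟩ u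
    have hfv : fseq (2*(q/3)) = 3*(q/3) := by simp only [fseq]; omega
    simp only [Fin.val_mk] at hd ⊢
    rw [hfv, hq] at hd
    have : Nat.dist (3*(q/3)) q ≤ 2 := by simp only [Nat.dist]; omega
    omega
  · refine ⟨⟨2*m-1, h1⟩, ?_⟩
    have hd := dist_vseq_le hn0 hfk ⟨2*m-1, h1⟩ u
    have hfv : fseq (2*m-1) = 3*m-2 := by simp only [fseq]; omega
    simp only [Fin.val_mk] at hd ⊢
    rw [hfv, hq, hq3] at hd
    have : Nat.dist (3*m-2) (3*m) ≤ 2 := by simp only [Nat.dist]; omega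
    omega

/-! ### the lower-bound constructions -/

/-- case n ≡ 0 (mod 3) -/
lemma construct0 (s m : ℕ) (hm : 1 ≤ m) (hn : n = 3*m) :
    ∃ (v : Fin (2*m) → ILTVert (Fin n) (s+1)),
      IsCoolingSeq (ILTiter (SimpleGraph.pathGraph n) (s+1)) v ∧
      coolTime (ILTiter (SimpleGraph.pathGraph n) (s+1)) v = 2*m+1 := by
  have hn0 : 0 < n := by omega
  have hfk : ∀ i, i < 2*m → fseq i < n := by
    intro i hi; simp only [fseq]; omega
  have cover := cover_vseq (s := s) (m := m) hn0 hfk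
    (by intro q hq; left; constructor <;> omega)
  refine ⟨vseq s (2*m) hfk, ⟨cond1_vseq hn0 hfk, cover⟩, ?_⟩
  apply le_antisymm
  · exact coolTime_le_of_cover cover
  · have hlast : (n - 1 : ℕ) < n := by omega
    refine le_coolTime_of_witness (Sum.inr (emb s ⟨n-1, hlast⟩)) (by omega) ?_
    intro i
    have hd := dist_vseq_ge hn0 hfk i (Sum.inr (emb s ⟨n-1, hlast⟩))
    have hpu : pos (s+1) (Sum.inr (emb s ⟨n-1, hlast⟩) : ILTVert (Fin n) (s+1)) = n-1 :=
      pos_emb s _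
    rw [hpu] at hd
    have hik : (i : ℕ) < 2*m := i.isLt
    have : 2*m+1 ≤ (i : ℕ) + 1 + Nat.dist (fseq (i : ℕ)) (n-1) := by
      simp only [fseq, Nat.dist]
      omega
    exact le_trans this (Nat.add_le_add_left hd _)

/-- case n ≡ 1 (mod 3) -/
lemma construct1 (s m : ℕ) (hm : 1 ≤ m) (hn : n = 3*m+1) :
    ∃ (v : Fin (2*m+1) → ILTVert (Fin n) (s+1)),
      IsCoolingSeq (ILTiter (SimpleGraph.pathGraph n) (s+1)) v ∧
      coolTime (ILTiter (SimpleGraph.pathGraph n) (s+1)) v = 2*m+2 := by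
  have hn0 : 0 < n := by omega
  have hfk : ∀ i, i < 2*m+1 → fseq i < n := by
    intro i hi; simp only [fseq]; omega
  have cover := cover_vseq (s := s) (m := m) hn0 hfk
    (by intro q hq
        rcases (by omega : q/3 ≤ m - 1 ∨ q = 3*m) with ha | ha
        · left; constructor <;> omega
        · right; refine ⟨ha, by omega, by omega, hm⟩)
  refine ⟨vseq s (2*m+1) hfk, ⟨cond1_vseq hn0 hfk, cover⟩, ?_⟩
  apply le_antisymm
  · exact coolTime_le_of_cover cover
  · have h3m : (3*m : ℕ) < n := by omega
    refine le_coolTime_of_witness (emb (s+1) ⟨3*m, h3m⟩) (by omega) ?_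
    intro i
    have hpu : pos (s+1) (emb (s+1) ⟨3*m, h3m⟩) = 3*m := pos_emb (s+1) _
    have hik : (i : ℕ) < 2*m+1 := i.isLt
    rcases (by omega : (i : ℕ) ≤ 2*m-1 ∨ (i : ℕ) = 2*m) with hi | hi
    · have hd := dist_vseq_ge hn0 hfk i (emb (s+1) ⟨3*m, h3m⟩)
      rw [hpu] at hd
      have : 2*m+2 ≤ (i : ℕ) + 1 + Nat.dist (fseq (i : ℕ)) (3*m) := by
        simp only [fseq, Nat.dist]
        omega
      omega
    · have hne : vseq s (2*m+1) hfk i ≠ emb (s+1) ⟨3*m, h3m⟩ := by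
        simp only [vseq, emb]
        intro h
        cases h
      have := ((ILTiter_connected hn0 (s+1)).pos_dist_of_ne hne)
      omega

/-- case n ≡ 2 (mod 3), t ≥ 2 -/
lemma construct2b (s' m : ℕ) (hm : 1 ≤ m) (hn : n = 3*m+2) :
    ∃ (v : Fin (2*m+2) → ILTVert (Fin n) (s'+1+1)),
      IsCoolingSeq (ILTiter (SimpleGraph.pathGraph n) (s'+1+1)) v ∧
      coolTime (ILTiter (SimpleGraph.pathGraph n) (s'+1+1)) v = 2*m+3 := by
  have hn0 : 0 < n := by omega
  have hfk : ∀ i, i < 2*m+2 → fseq i < n := by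
    intro i hi; simp only [fseq]; omega
  have cover := cover_vseq (s := s'+1) (m := m) hn0 hfk
    (by intro q hq; left; constructor <;> omega)
  refine ⟨vseq (s'+1) (2*m+2) hfk, ⟨cond1_vseq hn0 hfk, cover⟩, ?_⟩
  apply le_antisymm
  · exact coolTime_le_of_cover cover
  · have h3m1 : (3*m+1 : ℕ) < n := by omega
    obtain ⟨w, hw⟩ : ∃ w : ILTVert (Fin n) (s'+1),
        w = Sum.inr (emb s' ⟨3*m+1, h3m1⟩) := ⟨_, rfl⟩
    refine le_coolTime_of_witness (Sum.inr w : ILTVert (Fin n) (s'+1+1)) (by omega) ?_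
    intro i
    have hpu : pos (s'+1+1) (Sum.inr w : ILTVert (Fin n) (s'+1+1)) = 3*m+1 := by
      rw [hw]; exact pos_emb s' _
    have hik : (i : ℕ) < 2*m+2 := i.isLt
    rcases (by omega : (i : ℕ) ≤ 2*m-1 ∨ (i : ℕ) = 2*m ∨ (i : ℕ) = 2*m+1) with hi | hi | hi
    · have hd := dist_vseq_ge hn0 hfk i (Sum.inr w : ILTVert (Fin n) (s'+1+1))
      rw [hpu] at hd
      have : 2*m+3 ≤ (i : ℕ) + 1 + Nat.dist (fseq (i : ℕ)) (3*m+1) := by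
        simp only [fseq, Nat.dist]
        omega
      exact le_trans this (Nat.add_le_add_left hd _)
    · have hne : (emb (s'+1) ⟨fseq (i : ℕ), hfk (i : ℕ) i.isLt⟩ : ILTVert (Fin n) (s'+1)) ≠
          w := by
        rw [hw]
        simp only [emb]
        intro h
        cases h
      have h2 := dist_clones_ge_two hn0 (s'+1) hne
      simp only [vseq]
      refine le_trans ?_ (Nat.add_le_add_left h2 _)
      omega
    · have hne : vseq (s'+1) (2*m+2) hfk i ≠ (Sum.inr w : ILTVert (Fin n) (s'+1+1)) := by
        rw [hw]
        simp only [vseq, emb]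
        intro h
        have := Sum.inr.inj h
        cases this
      have := ((ILTiter_connected hn0 (s'+1+1)).pos_dist_of_ne hne)
      refine le_trans ?_ (Nat.add_le_add_left (Nat.succ_le_of_lt this) _)
      omega

/-- case n ≡ 2 (mod 3), t = 1 : sequence of length 2m+2 whose coolTime is ≥ 2m+2 -/
lemma construct2a (m : ℕ) (hm : 1 ≤ m) (hn : n = 3*m+2) :
    ∃ (v : Fin (2*m+2) → ILTVert (Fin n) (0+1)),
      IsCoolingSeq (ILTiter (SimpleGraph.pathGraph n) (0+1)) v ∧
      2*m+2 ≤ coolTime (ILTiter (SimpleGraph.pathGraph n) (0+1)) v := by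
  have hn0 : 0 < n := by omega
  have hfk : ∀ i, i < 2*m+2 → fseq i < n := by
    intro i hi; simp only [fseq]; omega
  have cover := cover_vseq (s := 0) (m := m) hn0 hfk
    (by intro q hq; left; constructor <;> omega)
  have hcond1 := cond1_vseq (s := 0) hn0 hfk
  refine ⟨vseq 0 (2*m+2) hfk, ⟨hcond1, cover⟩, ?_⟩
  refine le_coolTime_of_witness (vseq 0 (2*m+2) hfk ⟨2*m+1, by omega⟩) (by omega) ?_
  intro i
  by_cases hi : i = ⟨2*m+1, by omega⟩
  · rw [hi, SimpleGraph.dist_self]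
  · have hlt : i < ⟨2*m+1, by omega⟩ := by
      rw [Fin.lt_def]
      simp only [Fin.val_mk]
      have h1 := i.isLt
      rcases Nat.lt_or_ge (i : ℕ) (2*m+1) with h | h
      · exact h
      · exact absurd (Fin.ext (show (i : ℕ) = 2*m+1 by omega) : i = ⟨2*m+1, by omega⟩) hi
    have hc := hcond1 i ⟨2*m+1, by omega⟩ hlt
    simp only [Fin.val_mk] at hc ⊢
    omega

end assembly
end CoolILT

namespace CoolILT
open SimpleGraph

variable {n : ℕ}

/-- any cooling sequence satisfies the abstract gap/range conditions, hence is short -/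
lemma k_le_of_isCooling {s k : ℕ} (hn3 : 3 ≤ n)
    {v : Fin k → ILTVert (Fin n) (s+1)}
    (hv : IsCoolingSeq (ILTiter (SimpleGraph.pathGraph n) (s+1)) v) :
    k ≤ (2*n+2)/3 := by
  have hn0 : 0 < n := by omega
  set x : ℕ → ℕ := fun i => if h : i < k then pos (s+1) (v ⟨i, h⟩) else 0 with hxdef
  have hx : ∀ i (h : i < k), x i = pos (s+1) (v ⟨i, h⟩) := by
    intro i h
    simp only [hxdef, dif_pos h]
  have hrange : ∀ i < k, x i < n := by
    intro i h
    rw [hx i h]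
    exact pos_lt _ _
  have hgap : ∀ i j, i + 2 ≤ j → j < k → j - i < Nat.dist (x i) (x j) := by
    intro i j hij hj
    have hik : i < k := by omega
    have hlt : (⟨i, hik⟩ : Fin k) < ⟨j, hj⟩ := Fin.mk_lt_mk.mpr (by omega)
    have hd := hv.1 ⟨i, hik⟩ ⟨j, hj⟩ hlt
    simp only [Fin.mk_le_mk, Fin.val_mk] at hd
    have hle := dist_le_pos hn0 (s+1) (v ⟨i, hik⟩) (v ⟨j, hj⟩)
    rw [← hx i hik, ← hx j hj] at hle
    omega
  exact k_le hgap hrange hn3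

lemma coolTime_le_of_isCooling {s k : ℕ} (hn3 : 3 ≤ n)
    {v : Fin k → ILTVert (Fin n) (s+1)}
    (hv : IsCoolingSeq (ILTiter (SimpleGraph.pathGraph n) (s+1)) v) :
    coolTime (ILTiter (SimpleGraph.pathGraph n) (s+1)) v ≤ (2*n+2)/3 + 1 := by
  have h1 := coolTime_le_of_cover hv.2
  have h2 := k_le_of_isCooling hn3 hv
  omega

/-- the refined upper bound for t = 1, n ≡ 2 (mod 3) -/
lemma coolTime_le_refined {k m : ℕ} (hm : 1 ≤ m) (hn : n = 3*m+2)
    {v : Fin k → ILTVert (Fin n) (0+1)}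
    (hv : IsCoolingSeq (ILTiter (SimpleGraph.pathGraph n) (0+1)) v) :
    coolTime (ILTiter (SimpleGraph.pathGraph n) (0+1)) v ≤ 2*m+2 := by
  have hn0 : 0 < n := by omega
  have hn3 : 3 ≤ n := by omega
  have hkle : k ≤ 2*m+2 := by
    have := k_le_of_isCooling hn3 hv
    omega
  rcases (by omega : k ≤ 2*m+1 ∨ k = 2*m+2) with hk | hk
  · have := coolTime_le_of_cover hv.2
    omega
  · subst hk
    apply Finset.sup_le
    intro u _
    by_contra hgt
    push_neg at hgt
    have hall : ∀ i : Fin (2*m+2), 2*m+3 ≤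
        (i : ℕ) + 1 + (ILTiter (SimpleGraph.pathGraph n) (0+1)).dist (v i) u := by
      intro i
      have hmem : ((i : ℕ) + 1 + (ILTiter (SimpleGraph.pathGraph n) (0+1)).dist (v i) u) ∈
          {m_1 : ℕ | ∃ i_1 : Fin (2*m+2), m_1 = (i_1 : ℕ) + 1 +
            (ILTiter (SimpleGraph.pathGraph n) (0+1)).dist (v i_1) u} := ⟨i, rfl⟩
      have := Nat.sInf_le hmem
      omega
    -- positions
    set x : ℕ → ℕ := fun i => if h : i < 2*m+2 then pos (0+1) (v ⟨i, h⟩) else 0 with hxdef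
    have hx : ∀ i (h : i < 2*m+2), x i = pos (0+1) (v ⟨i, h⟩) := by
      intro i h
      simp only [hxdef, dif_pos h]
    have hrange : ∀ i < 2*m+2, x i < 3*m+2 := by
      intro i h
      rw [hx i h, ← hn]
      exact pos_lt _ _
    have hgap : ∀ i j, i + 2 ≤ j → j < 2*m+2 → j - i < Nat.dist (x i) (x j) := by
      intro i j hij hj
      have hik : i < 2*m+2 := by omega
      have hlt : (⟨i, hik⟩ : Fin (2*m+2)) < ⟨j, hj⟩ := Fin.mk_lt_mk.mpr (by omega)
      have hd := hv.1 ⟨i, hik⟩ ⟨j, hj⟩ hlt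
      simp only [Fin.mk_le_mk, Fin.val_mk] at hd
      have hle := dist_le_pos hn0 (0+1) (v ⟨i, hik⟩) (v ⟨j, hj⟩)
      rw [← hx i hik, ← hx j hj] at hle
      omega
    have hinj : ∀ i j, i < j → j < 2*m+2 → x i ≠ x j := by
      intro i j hij hj heq
      have hik : i < 2*m+2 := by omega
      have hlt : (⟨i, hik⟩ : Fin (2*m+2)) < ⟨j, hj⟩ := Fin.mk_lt_mk.mpr (by omega)
      have hd := hv.1 ⟨i, hik⟩ ⟨j, hj⟩ hlt
      simp only [Fin.mk_le_mk, Fin.val_mk] at hd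
      have hd2 : 2 ≤ (ILTiter (SimpleGraph.pathGraph n) (0+1)).dist (v ⟨i, hik⟩) (v ⟨j, hj⟩) := by
        omega
      have hpos : Nat.dist (pos (0+1) (v ⟨i, hik⟩)) (pos (0+1) (v ⟨j, hj⟩)) ≤ 1 := by
        rw [← hx i hik, ← hx j hj, heq, Nat.dist_self]
        omega
      obtain ⟨p, q, hp, hq⟩ := both_clones hn0 hd2 hpos
      have hpv : p.val = q.val := by
        have e1 : pos (0+1) (v ⟨i, hik⟩) = p.val := by rw [hp]; rfl
        have e2 : pos (0+1) (v ⟨j, hj⟩) = q.val := by rw [hq]; rfl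
        rw [← hx i hik] at e1
        rw [← hx j hj] at e2
        omega
      have : v ⟨i, hik⟩ = v ⟨j, hj⟩ := by rw [hp, hq, Fin.ext hpv]
      rw [this, SimpleGraph.dist_self] at hd
      omega
    -- witness conditions
    have hwit : ∀ i, i + 3 ≤ 2*m+2 →
        2*m+2 - i ≤ Nat.dist (x i) (pos (0+1) u) := by
      intro i hi
      have hik : i < 2*m+2 := by omega
      have h1 := hall ⟨i, hik⟩
      simp only [Fin.val_mk] at h1 
      have hle := dist_le_pos hn0 (0+1) (v ⟨i, hik⟩) u
      rw [← hx i hik] at hle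
      omega
    -- uniqueness
    have hyn : pos (0+1) u < 3*m+2 := by rw [← hn]; exact pos_lt _ _
    -- common final contradiction, given the positions of the last two sources and of u
    have final : ∀ (hx1 : x (2*m) = fseq (2*m)) (hx2 : x (2*m+1) = fseq (2*m+1))
        (hy : pos (0+1) u = 3*m+1) (hd1 : Nat.dist (x (2*m)) (pos (0+1) u) ≤ 1)
        (hd12 : Nat.dist (x (2*m)) (x (2*m+1)) ≤ 1), False := by
      intro hx1 hx2 hy hd1 hd12
      have hi1 : (2*m : ℕ) < 2*m+2 := by omega
      have hi2 : (2*m+1 : ℕ) < 2*m+2 := by omega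
      have ha1 := hall ⟨2*m, hi1⟩
      have ha2 := hall ⟨2*m+1, hi2⟩
      simp only [Fin.val_mk] at ha1 ha2
      have hd2u : 2 ≤ (ILTiter (SimpleGraph.pathGraph n) (0+1)).dist (v ⟨2*m, hi1⟩) u := by
        omega
      have hdvv : 2 ≤ (ILTiter (SimpleGraph.pathGraph n) (0+1)).dist
          (v ⟨2*m, hi1⟩) (v ⟨2*m+1, hi2⟩) := by
        have hlt : (⟨2*m, hi1⟩ : Fin (2*m+2)) < ⟨2*m+1, hi2⟩ := Fin.mk_lt_mk.mpr (by omega)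
        have := hv.1 ⟨2*m, hi1⟩ ⟨2*m+1, hi2⟩ hlt
        simp only [Fin.val_mk] at this
        omega
      obtain ⟨p, qu, hp, hqu⟩ := both_clones hn0 hd2u
        (by rw [← hx _ hi1]; exact hd1)
      obtain ⟨p', q, hp', hq⟩ := both_clones hn0 hdvv
        (by rw [← hx _ hi1, ← hx _ hi2]; exact hd12)
      have hquv : qu.val = 3*m+1 := by
        have : pos (0+1) u = qu.val := by rw [hqu]; rfl
        omega
      have hqv : q.val = 3*m+1 := by
        have e2 : pos (0+1) (v ⟨2*m+1, hi2⟩) = q.val := by rw [hq]; rfl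
        rw [← hx _ hi2] at e2
        have : fseq (2*m+1) = 3*m+1 := by simp only [fseq]; omega
        omega
      have huv : u = v ⟨2*m+1, hi2⟩ := by
        rw [hqu, hq, Fin.ext (hquv.trans hqv.symm)]
      rw [huv, SimpleGraph.dist_self] at ha2
      omega
    rcases unique_extremal m x hrange hinj hgap with hf | hr
    · -- x = fseq
      have hy : pos (0+1) u = 3*m+1 := by
        apply witness_pos hm hyn
        intro i hi
        have := hwit i hi
        rw [hf i (by omega)] at this
        exact this
      apply final (hf _ (by omega)) (hf _ (by omega)) hy
      · rw [hf _ (by omega), hy]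
        have : fseq (2*m) = 3*m := by simp only [fseq]; omega
        rw [this]
        simp only [Nat.dist]
        omega
      · rw [hf _ (by omega), hf _ (by omega)]
        have e1 : fseq (2*m) = 3*m := by simp only [fseq]; omega
        have e2 : fseq (2*m+1) = 3*m+1 := by simp only [fseq]; omega
        rw [e1, e2]
        simp only [Nat.dist]
        omega
    · -- x reflected : use the mirrored witness
      exfalso
      have hy0 : pos (0+1) u = 0 := by
        have hy' : 3*m+1 - pos (0+1) u = 3*m+1 := by
          apply witness_pos hm (by omega)
          intro i hi
          have h2 := hwit i hi
          rw [hr i (by omega)] at h2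
          have hfle : fseq i ≤ 3*m+1 := by simp only [fseq]; omega
          simp only [Nat.dist] at h2 ⊢
          omega
        omega
      -- mirrored final contradiction (inline)
      have hx1 : x (2*m) = 1 := by
        have := hr (2*m) (by omega)
        have : fseq (2*m) = 3*m := by simp only [fseq]; omega
        omega
      have hx2 : x (2*m+1) = 0 := by
        have := hr (2*m+1) (by omega)
        have : fseq (2*m+1) = 3*m+1 := by simp only [fseq]; omega
        omega
      have hi1 : (2*m : ℕ) < 2*m+2 := by omega
      have hi2 : (2*m+1 : ℕ) < 2*m+2 := by omega
      have ha2 := hall ⟨2*m+1, hi2⟩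
      simp only [Fin.val_mk] at ha2
      have ha1 := hall ⟨2*m, hi1⟩
      simp only [Fin.val_mk] at ha1
      have hd2u : 2 ≤ (ILTiter (SimpleGraph.pathGraph n) (0+1)).dist (v ⟨2*m, hi1⟩) u := by
        omega
      have hdvv : 2 ≤ (ILTiter (SimpleGraph.pathGraph n) (0+1)).dist
          (v ⟨2*m, hi1⟩) (v ⟨2*m+1, hi2⟩) := by
        have hlt : (⟨2*m, hi1⟩ : Fin (2*m+2)) < ⟨2*m+1, hi2⟩ := Fin.mk_lt_mk.mpr (by omega)
        have := hv.1 ⟨2*m, hi1⟩ ⟨2*m+1, hi2⟩ hlt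
        simp only [Fin.val_mk] at this
        omega
      obtain ⟨p, qu, hp, hqu⟩ := both_clones hn0 hd2u
        (by rw [← hx _ hi1, hx1, hy0]; simp only [Nat.dist]; omega)
      obtain ⟨p', q, hp', hq⟩ := both_clones hn0 hdvv
        (by rw [← hx _ hi1, ← hx _ hi2, hx1, hx2]; simp only [Nat.dist]; omega)
      have hquv : qu.val = 0 := by
        have : pos (0+1) u = qu.val := by rw [hqu]; rfl
        omega
      have hqv : q.val = 0 := by
        have e2 : pos (0+1) (v ⟨2*m+1, hi2⟩) = q.val := by rw [hq]; rfl
        rw [← hx _ hi2] at e2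
        omega
      have huv : u = v ⟨2*m+1, hi2⟩ := by
        rw [hqu, hq, Fin.ext (hquv.trans hqv.symm)]
      rw [huv, SimpleGraph.dist_self] at ha2
      omega

end CoolILT

namespace CoolILT

lemma coolingNumber_eq {W : Type*} [Fintype W] (G : SimpleGraph W) (B : ℕ)
    (hub : ∀ (k : ℕ) (v : Fin k → W), IsCoolingSeq G v → coolTime G v ≤ B)
    (hmem : ∃ (k : ℕ) (v : Fin k → W), IsCoolingSeq G v ∧ coolTime G v = B) :
    coolingNumber G = B := by
  apply le_antisymm
  · apply csSup_le'
    rintro T ⟨k, v, hv, rfl⟩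
    exact hub k v hv
  · apply le_csSup
    · refine ⟨B, ?_⟩
      rintro T ⟨k, v, hv, rfl⟩
      exact hub k v hv
    · obtain ⟨k, v, hv, he⟩ := hmem
      exact ⟨k, v, hv, he.symm⟩

end CoolILT

/-- For `n ≥ 3` and `t ≥ 1`, the cooling number of `ILT_t(P_n)` equals `⌈2n/3⌉` if
`t = 1` and `n ≡ 2 (mod 3)`, and `⌈2n/3⌉ + 1` otherwise. -/
theorem coolingNumber_ILTiter_pathGraph (n t : ℕ) (hn : 3 ≤ n) (ht : 1 ≤ t) :
    coolingNumber (ILTiter (SimpleGraph.pathGraph n) t) =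
      if t = 1 ∧ n % 3 = 2 then (2 * n + 2) / 3 else (2 * n + 2) / 3 + 1 := by 
  obtain ⟨s, rfl⟩ : ∃ s, t = s + 1 := ⟨t - 1, by omega⟩
  rcases (by omega : n % 3 = 0 ∨ n % 3 = 1 ∨ n % 3 = 2) with h3 | h3 | h3
  · rw [if_neg (by omega)]
    obtain ⟨m, hm, hnm⟩ : ∃ m, 1 ≤ m ∧ n = 3*m := ⟨n/3, by omega, by omega⟩
    obtain ⟨v, hv, hct⟩ := CoolILT.construct0 s m hm hnm
    apply CoolILT.coolingNumber_eq
    · intro k v hv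
      have := CoolILT.coolTime_le_of_isCooling hn hv
      omega
    · exact ⟨_, v, hv, by rw [hct]; omega⟩
  · rw [if_neg (by omega)]
    obtain ⟨m, hm, hnm⟩ : ∃ m, 1 ≤ m ∧ n = 3*m+1 := ⟨n/3, by omega, by omega⟩
    obtain ⟨v, hv, hct⟩ := CoolILT.construct1 s m hm hnm
    apply CoolILT.coolingNumber_eq
    · intro k v hv
      have := CoolILT.coolTime_le_of_isCooling hn hv
      omega
    · exact ⟨_, v, hv, by rw [hct]; omega⟩
  · obtain ⟨m, hm, hnm⟩ : ∃ m, 1 ≤ m ∧ n = 3*m+2 := ⟨n/3, by omega, by omega⟩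
    rcases s with _ | s'
    · rw [if_pos ⟨rfl, h3⟩]
      obtain ⟨v, hv, hct⟩ := CoolILT.construct2a m hm hnm
      apply CoolILT.coolingNumber_eq
      · intro k v hv
        have := CoolILT.coolTime_le_refined hm hnm hv
        omega
      · refine ⟨_, v, hv, ?_⟩
        have hle := CoolILT.coolTime_le_refined hm hnm hv
        omega
    · rw [if_neg (by omega)]
      obtain ⟨v, hv, hct⟩ := CoolILT.construct2b s' m hm hnm
      apply CoolILT.coolingNumber_eq
      · intro k v hv
        have := CoolILT.coolTime_le_of_isCooling hn hv
        omega
      · exact ⟨_, v, hv, by rw [hct]; omega⟩
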